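/- Let T > 0, g ∈ ℝ³, let α : [0,T] → [0,∞) be continuous, let u : [0,T] × ℝ³ → ℝ³ satisfy |u(s,x) − u(s,y)| ≤ α(s)·|x − y| for all s ∈ [0,T] and x, y ∈ ℝ³, and let λ ≥ 4·max{1, sup_{[0,T]} α}. Fix t ∈ [0,T], x ∈ ℝ³ and v₁, v₂ ∈ ℝ³, and for i = 1, 2 let (X_i, V_i) : [0,T] → ℝ³ × ℝ³ be differentiable solutions of the characteristic system X_i'(s) = V_i(s), V_i'(s) = λ(g + u(s, X_i(s)) − V_i(s)) with terminal conditions X_i(t) = x, V_i(t) = v_i. Set M(t) := exp(∫_0^t 2α(τ) dτ). Then M(t)^{-1}·e^{λt}·|v₁ − v₂| ≤ |V₁(0) − V₂(0)| ≤ M(t)·e^{λt}·|v₁ − v₂|. -/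

import Mathlib

open Set

local notation "E3" => EuclideanSpace ℝ (Fin 3)

open Topology Filter MeasureTheory

lemma gronwall_fwd {f f' : ℝ → E3} {a b : ℝ} (hab : a ≤ b)
    (hf : ∀ x ∈ Icc a b, HasDerivWithinAt f (f' x) (Icc a b) x)
    {β : ℝ → ℝ} (hβ : Continuous β) (hβ0 : ∀ x ∈ Icc a b, 0 ≤ β x)
    {η : ℝ} (hη : 0 < η)
    (hbound : ∀ x ∈ Ico a b, ‖f' x‖ ≤ β x * (‖f x‖ + η)) :
    ∀ x ∈ Icc a b, ‖f x‖ + η ≤ (‖f a‖ + η) * Real.exp (∫ s in a..x, β s) := by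
  -- clamp
  set c : ℝ → ℝ := fun s => max a (min b s) with hcdef
  have hc_cont : Continuous c := continuous_const.max (continuous_const.min continuous_id)
  have hc_mem : ∀ s, c s ∈ Icc a b := fun s => ⟨le_max_left _ _, max_le hab (min_le_left _ _)⟩
  have hc_eq : ∀ s ∈ Icc a b, c s = s := fun s hs => by
    simp [hcdef, min_eq_right hs.2, max_eq_right hs.1]
  have hfc : ContinuousOn f (Icc a b) := fun s hs => (hf s hs).continuousWithinAt
  set q : ℝ → ℝ := fun s => β s * (‖f (c s)‖ + η) with hqdef
  have hq_cont : Continuous q :=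
    hβ.mul (((hfc.comp_continuous hc_cont hc_mem).norm).add continuous_const)
  have hq_eq : ∀ s ∈ Icc a b, q s = β s * (‖f s‖ + η) := fun s hs => by
    simp [hqdef, hc_eq s hs]
  set m : ℝ → ℝ := fun x => ‖f a‖ + η + ∫ s in a..x, q s with hmdef
  have hm_deriv : ∀ x, HasDerivAt m (q x) x := fun x =>
    (intervalIntegral.integral_hasDerivAt_right (hq_cont.intervalIntegrable _ _)
      (hq_cont.stronglyMeasurableAtFilter _ _) hq_cont.continuousAt).const_add _
  -- step 1 : ‖f x‖ + η ≤ m x on Icc a b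
  have step1 : ∀ x ∈ Icc a b, ‖f x‖ + η ≤ m x := by
    have key : ∀ ⦃x⦄, x ∈ Icc a b → ‖f x‖ ≤ m x - η := by
      refine image_norm_le_of_norm_deriv_right_le_deriv_boundary
        hfc
        (fun x hx => ((hf x ⟨hx.1, hx.2.le⟩).mono_of_mem_nhdsWithin
          (Icc_mem_nhdsGE_of_mem hx)))
        ?_ (fun x => (hm_deriv x).sub_const η) ?_
      · simp [hmdef]
      · intro x hx
        rw [hq_eq x ⟨hx.1, hx.2.le⟩]
        exact hbound x hx
    intro x hx; linarith [key hx]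
  -- step 2 : m x ≤ m a * exp (∫ β)
  have hG : ∀ x : ℝ, HasDerivAt (fun y => ∫ s in a..y, β s) (β x) x := fun x =>
    intervalIntegral.integral_hasDerivAt_right (hβ.intervalIntegrable _ _)
      (hβ.stronglyMeasurableAtFilter _ _) hβ.continuousAt
  set φ : ℝ → ℝ := fun x => m x * Real.exp (-∫ s in a..x, β s) with hφdef
  have hφ_deriv : ∀ x, HasDerivAt φ ((q x - β x * m x) * Real.exp (-∫ s in a..x, β s)) x := by
    intro x
    have h1 := (hm_deriv x).mul (((hG x).neg).exp)
    convert h1 using 1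
    case e'_9 =>
      simp only [Pi.neg_apply]
      ring
    all_goals rfl
  have hφ_anti : AntitoneOn φ (Icc a b) := by
    apply antitoneOn_of_deriv_nonpos (convex_Icc a b)
      (fun x hx => (hφ_deriv x).continuousAt.continuousWithinAt)
      (fun x hx => (hφ_deriv x).differentiableAt.differentiableWithinAt)
    intro x hx
    rw [interior_Icc] at hx
    rw [(hφ_deriv x).deriv]
    have hx' : x ∈ Icc a b := ⟨hx.1.le, hx.2.le⟩
    have h1 : q x ≤ β x * m x := by
      rw [hq_eq x hx']
      exact mul_le_mul_of_nonneg_left (step1 x hx') (hβ0 x hx')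
    have := Real.exp_pos (-∫ s in a..x, β s)
    nlinarith
  intro x hx
  have h2 : φ x ≤ φ a := hφ_anti (left_mem_Icc.2 hab) hx hx.1
  have h3 : φ a = ‖f a‖ + η := by simp [hφdef, hmdef]
  have h4 : m x ≤ (‖f a‖ + η) * Real.exp (∫ s in a..x, β s) := by
    rw [← h3]
    have he : Real.exp (-∫ s in a..x, β s) * Real.exp (∫ s in a..x, β s) = 1 := by
      rw [← Real.exp_add]; simp
    calc m x = φ x * Real.exp (∫ s in a..x, β s) := by
              simp only [hφdef]; rw [mul_assoc, he, mul_one]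
      _ ≤ φ a * Real.exp (∫ s in a..x, β s) :=
              mul_le_mul_of_nonneg_right h2 (Real.exp_pos _).le
  exact le_trans (step1 x hx) h4

lemma gronwall_rev {f f' : ℝ → E3} {a b : ℝ} (hab : a ≤ b)
    (hf : ∀ x ∈ Icc a b, HasDerivWithinAt f (f' x) (Icc a b) x)
    {β : ℝ → ℝ} (hβ : Continuous β) (hβ0 : ∀ x ∈ Icc a b, 0 ≤ β x)
    {η : ℝ} (hη : 0 < η)
    (hbound : ∀ x ∈ Icc a b, ‖f' x‖ ≤ β x * (‖f x‖ + η)) :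
    ∀ x ∈ Icc a b, ‖f x‖ + η ≤ (‖f b‖ + η) * Real.exp (∫ s in x..b, β s) := by
  have hmem : ∀ r ∈ Icc a b, a + b - r ∈ Icc a b := fun r hr =>
    ⟨by linarith [hr.2], by linarith [hr.1]⟩
  have hg : ∀ r ∈ Icc a b, HasDerivWithinAt (fun r => f (a + b - r))
      ((-1 : ℝ) • f' (a + b - r)) (Icc a b) r := by
    intro r hr
    have hh : HasDerivWithinAt (fun r : ℝ => a + b - r) (-1) (Icc a b) r := by
      simpa using (hasDerivWithinAt_id r (Icc a b)).const_sub (a + b)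
    exact HasDerivWithinAt.scomp r (hf _ (hmem r hr)) hh hmem
  have key := gronwall_fwd hab hg (hβ.comp (continuous_const.sub continuous_id))
    (fun x hx => hβ0 _ (hmem x hx)) hη
    (fun x hx => by
      have := hbound (a + b - x) (hmem x ⟨hx.1, hx.2.le⟩)
      simpa using this)
  intro x hx
  have h1 := key (a + b - x) (hmem x hx)
  have h2 : a + b - (a + b - x) = x := by ring
  rw [h2] at h1
  have h3 : (∫ s in a..(a + b - x), β (a + b - s)) = ∫ s in x..b, β s := by
    have := intervalIntegral.integral_comp_sub_left (a := a) (b := a + b - x) (f := β) (a + b)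
    simpa using this
  simp only [Function.comp] at h1
  calc ‖f x‖ + η ≤ (‖f (a + b - a)‖ + η) * Real.exp (∫ s in a..(a+b-x), β (a + b - s)) := h1
    _ = (‖f b‖ + η) * Real.exp (∫ s in x..b, β s) := by rw [h3]; norm_num


set_option maxHeartbeats 2000000 in
/-- Bi-Lipschitz estimate for the velocity component of the characteristic
flow: if `u(s,·)` is `α(s)`-Lipschitz, `λ ≥ 4 max{1, sup α}`, and `(Xᵢ, Vᵢ)` solve the
characteristic system `X' = V`, `V' = λ(g + u(s,X) − V)` with terminal data
`Xᵢ(t) = x`, `Vᵢ(t) = vᵢ`, then with `M(t) = exp(∫_0^t 2α)` we have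
`M(t)⁻¹ e^{λt} |v₁ − v₂| ≤ |V₁(0) − V₂(0)| ≤ M(t) e^{λt} |v₁ − v₂|`. -/
theorem characteristics_biLipschitz
    (T : ℝ) (hT : 0 < T) (g : E3) (α : ℝ → ℝ)
    (hαcont : ContinuousOn α (Icc 0 T))
    (hα0 : ∀ s ∈ Icc (0 : ℝ) T, 0 ≤ α s)
    (u : ℝ → E3 → E3)
    (hu : ∀ s ∈ Icc (0 : ℝ) T, ∀ x y : E3, ‖u s x - u s y‖ ≤ α s * ‖x - y‖)
    (lam : ℝ) (hlam : 4 * max 1 (sSup (α '' Icc 0 T)) ≤ lam)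
    (t : ℝ) (ht : t ∈ Icc (0 : ℝ) T) (x v₁ v₂ : E3)
    (X₁ V₁ X₂ V₂ : ℝ → E3)
    (hX₁ : ∀ s ∈ Icc (0 : ℝ) T, HasDerivWithinAt X₁ (V₁ s) (Icc 0 T) s)
    (hV₁ : ∀ s ∈ Icc (0 : ℝ) T,
      HasDerivWithinAt V₁ (lam • (g + u s (X₁ s) - V₁ s)) (Icc 0 T) s)
    (hX₂ : ∀ s ∈ Icc (0 : ℝ) T, HasDerivWithinAt X₂ (V₂ s) (Icc 0 T) s)
    (hV₂ : ∀ s ∈ Icc (0 : ℝ) T,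
      HasDerivWithinAt V₂ (lam • (g + u s (X₂ s) - V₂ s)) (Icc 0 T) s)
    (hX₁t : X₁ t = x) (hV₁t : V₁ t = v₁) (hX₂t : X₂ t = x) (hV₂t : V₂ t = v₂) :
    (Real.exp (∫ τ in (0 : ℝ)..t, 2 * α τ))⁻¹ * Real.exp (lam * t) * ‖v₁ - v₂‖ ≤
        ‖V₁ 0 - V₂ 0‖ ∧
      ‖V₁ 0 - V₂ 0‖ ≤
        Real.exp (∫ τ in (0 : ℝ)..t, 2 * α τ) * Real.exp (lam * t) * ‖v₁ - v₂‖ := by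
  obtain ⟨ht0, htT⟩ := ht
  have hsub : Icc (0:ℝ) t ⊆ Icc 0 T := Icc_subset_Icc le_rfl htT
  set abar : ℝ := max 1 (sSup (α '' Icc 0 T)) with habar
  have habar1 : (1:ℝ) ≤ abar := le_max_left _ _
  have hαle : ∀ s ∈ Icc (0:ℝ) T, α s ≤ abar := by
    intro s hs
    refine le_trans (le_csSup ?_ (mem_image_of_mem α hs)) (le_max_right _ _)
    exact (isCompact_Icc.image_of_continuousOn hαcont).bddAbove
  have hlam' : 4 * abar ≤ lam := hlam
  have hlam4 : (4:ℝ) ≤ lam := by nlinarith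
  have hlam0 : (0:ℝ) < lam := by linarith
  set c : ℝ := lam - 2 * abar with hcdef
  have hc2 : lam / 2 ≤ c := by simp only [hcdef]; linarith
  have hc0 : (0:ℝ) < c := by linarith
  -- basic functions
  set W : ℝ → E3 := fun s => V₁ s - V₂ s with hWdef
  set Y : ℝ → E3 := fun s => X₁ s - X₂ s with hYdef
  set P : ℝ → E3 := fun s => Real.exp (lam * s) • W s with hPdef
  set A : ℝ → ℝ := fun s => Real.exp (lam * s) * ‖W s‖ with hAdef
  set Du : ℝ → E3 := fun s => u s (X₁ s) - u s (X₂ s) with hDudef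
  have hWt : W t = v₁ - v₂ := by simp [hWdef, hV₁t, hV₂t]
  have hYt : Y t = 0 := by simp [hYdef, hX₁t, hX₂t]
  have hA_eq : ∀ s, A s = ‖P s‖ := by
    intro s
    simp [hAdef, hPdef, norm_smul, abs_of_pos (Real.exp_pos _)]
  have hWnorm : ∀ s, ‖W s‖ = Real.exp (-(lam * s)) * A s := by
    intro s
    simp only [hAdef]
    rw [← mul_assoc, ← Real.exp_add]
    simp
  have hA0 : ∀ s, 0 ≤ A s := fun s => by
    rw [hA_eq]; exact norm_nonneg _
  -- extension of α
  set at' : ℝ → ℝ := fun s => α (max 0 (min T s)) with hatdef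
  have hatmem : ∀ s, max 0 (min T s) ∈ Icc (0:ℝ) T :=
    fun s => ⟨le_max_left _ _, max_le hT.le (min_le_left _ _)⟩
  have hatcont : Continuous at' :=
    hαcont.comp_continuous (continuous_const.max (continuous_const.min continuous_id)) hatmem
  have hateq : ∀ s ∈ Icc (0:ℝ) T, at' s = α s := by
    intro s hs
    simp [hatdef, min_eq_right hs.2, max_eq_right hs.1]
  have hat0 : ∀ s, 0 ≤ at' s := fun s => hα0 _ (hatmem s)
  have hatle : ∀ s, at' s ≤ abar := fun s => hαle _ (hatmem s)
  -- derivatives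
  have hWd : ∀ s ∈ Icc (0:ℝ) t, HasDerivWithinAt W
      (lam • (g + u s (X₁ s) - V₁ s) - lam • (g + u s (X₂ s) - V₂ s)) (Icc 0 t) s :=
    fun s hs => ((hV₁ s (hsub hs)).sub (hV₂ s (hsub hs))).mono hsub
  have hYd : ∀ s ∈ Icc (0:ℝ) t, HasDerivWithinAt Y (W s) (Icc 0 t) s :=
    fun s hs => ((hX₁ s (hsub hs)).sub (hX₂ s (hsub hs))).mono hsub
  have hPd : ∀ s ∈ Icc (0:ℝ) t, HasDerivWithinAt P
      ((lam * Real.exp (lam * s)) • Du s) (Icc 0 t) s := by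
    intro s hs
    have hes : HasDerivAt (fun r : ℝ => Real.exp (lam * r)) (Real.exp (lam * s) * (lam * 1)) s :=
      ((hasDerivAt_id s).const_mul lam).exp
    have h1 := hes.hasDerivWithinAt.smul (hWd s hs)
    convert h1 using 1
    case e'_9 =>
      simp only [hDudef, hWdef, smul_sub, smul_add, smul_smul, mul_one,
        mul_comm (Real.exp (lam * s)) lam]
      abel
    all_goals rfl
  have hPnorm : ∀ s ∈ Icc (0:ℝ) t,
      ‖(lam * Real.exp (lam * s)) • Du s‖ ≤ α s * (lam * Real.exp (lam * s) * ‖Y s‖) := by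
    intro s hs
    rw [norm_smul, Real.norm_eq_abs,
      abs_of_pos (by positivity : (0:ℝ) < lam * Real.exp (lam * s))]
    have h2 := hu s (hsub hs) (X₁ s) (X₂ s)
    calc lam * Real.exp (lam * s) * ‖Du s‖
        ≤ lam * Real.exp (lam * s) * (α s * ‖Y s‖) := by
          apply mul_le_mul_of_nonneg_left _ (by positivity)
          simpa [hDudef, hYdef] using h2
      _ = α s * (lam * Real.exp (lam * s) * ‖Y s‖) := by ring
  -- continuity
  have hWc : ContinuousOn W (Icc 0 t) := fun s hs => (hWd s hs).continuousWithinAt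
  have hYc : ContinuousOn Y (Icc 0 t) := fun s hs => (hYd s hs).continuousWithinAt
  have hAc : ContinuousOn A (Icc 0 t) :=
    ((Real.continuous_exp.comp (continuous_const.mul continuous_id)).continuousOn).mul hWc.norm
  obtain ⟨C, hC⟩ : ∃ C, ∀ s ∈ Icc (0:ℝ) t, ‖W s‖ ≤ C :=
    isCompact_Icc.exists_bound_of_continuousOn hWc
  -- integral bound on Y
  have hYb : ∀ σ ∈ Icc (0:ℝ) t, ‖Y σ‖ ≤ ∫ ρ in σ..t, ‖W ρ‖ := by
    intro σ hσ
    have hσt : σ ≤ t := hσ.2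
    have hsub2 : Icc σ t ⊆ Icc (0:ℝ) t := Icc_subset_Icc hσ.1 le_rfl
    have hWint : IntervalIntegrable W MeasureTheory.volume σ t :=
      (hWc.mono hsub2).intervalIntegrable_of_Icc hσt
    have ftc : (∫ ρ in σ..t, W ρ) = Y t - Y σ := by
      apply intervalIntegral.integral_eq_sub_of_hasDeriv_right_of_le hσt
        (hYc.mono hsub2) ?_ hWint
      intro ρ hρ
      exact (hYd ρ ⟨le_trans hσ.1 hρ.1.le, hρ.2.le⟩).mono_of_mem_nhdsWithin
        (Icc_mem_nhdsGT_of_mem ⟨le_trans hσ.1 hρ.1.le, hρ.2⟩)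
    have : ‖Y σ‖ = ‖∫ ρ in σ..t, W ρ‖ := by
      rw [ftc, hYt]; simp
    rw [this]
    exact intervalIntegral.norm_integral_le_integral_norm hσt
  -- main per-η estimate
  set Eex : ℝ := Real.exp (∫ τ in (0:ℝ)..t, 2 * α τ) with hEdef
  have hEeq : (∫ s in (0:ℝ)..t, 2 * at' s) = ∫ τ in (0:ℝ)..t, 2 * α τ := by
    apply intervalIntegral.integral_congr
    intro s hs
    rw [uIcc_of_le ht0] at hs
    show 2 * at' s = 2 * α s
    rw [hateq s (hsub hs)]
  have key : ∀ η : ℝ, 0 < η → A t + η ≤ (A 0 + η) * Eex ∧ A 0 + η ≤ (A t + η) * Eex := by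
    intro η hη
    set Z : ℝ → ℝ := fun σ => lam * Real.exp (lam * σ) * ‖Y σ‖ - 2 * (A σ + η) with hZdef
    have hZneg : ∀ σ ∈ Icc (0:ℝ) t, Z σ < 0 := by
      have hZcont : ContinuousOn Z (Icc 0 t) := by
        apply ContinuousOn.sub
        · exact ((continuous_const.mul (Real.continuous_exp.comp
            (continuous_const.mul continuous_id))).continuousOn).mul hYc.norm
        · exact continuousOn_const.mul (hAc.add continuousOn_const)
      have hZt : Z t < 0 := by
        have h1 : Z t = -(2 * (A t + η)) := by
          simp [hZdef, hYt]
        rw [h1]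
        have := hA0 t
        linarith
      by_contra hcon
      push_neg at hcon
      obtain ⟨σ₁, hσ₁mem, hσ₁⟩ := hcon
      set K : Set ℝ := Icc 0 t ∩ Z ⁻¹' (Ici 0) with hKdef
      have hKcl : IsClosed K := hZcont.preimage_isClosed_of_isClosed isClosed_Icc isClosed_Ici
      have hKcp : IsCompact K := isCompact_Icc.of_isClosed_subset hKcl inter_subset_left
      have hKne : K.Nonempty := ⟨σ₁, hσ₁mem, hσ₁⟩
      obtain ⟨σ₀, ⟨hσ₀mem, hσ₀Z⟩, hσ₀ub⟩ := hKcp.exists_isGreatest hKne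
      have hσ₀Z' : (0:ℝ) ≤ Z σ₀ := hσ₀Z
      have hσ₀t : σ₀ < t := lt_of_le_of_ne hσ₀mem.2 (by rintro rfl; linarith)
      have hZlt : ∀ σ, σ₀ < σ → σ ≤ t → Z σ < 0 := by
        intro σ h1 h2
        by_contra h3
        push_neg at h3
        have hmem : σ ∈ K := ⟨⟨le_trans hσ₀mem.1 h1.le, h2⟩, h3⟩
        have := hσ₀ub hmem
        linarith
      -- Gronwall estimate on [σ', t] for σ' > σ₀
      have stepi : ∀ σ' ∈ Ioc σ₀ t, ∀ ρ ∈ Icc σ' t,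
          A ρ + η ≤ (A σ' + η) * Real.exp (2 * abar * (ρ - σ')) := by
        intro σ' hσ' ρ hρ
        have hσ'0 : (0:ℝ) ≤ σ' := le_trans hσ₀mem.1 hσ'.1.le
        have hsub3 : Icc σ' t ⊆ Icc (0:ℝ) t := Icc_subset_Icc hσ'0 le_rfl
        have hbd : ∀ s ∈ Ico σ' t,
            ‖(lam * Real.exp (lam * s)) • Du s‖ ≤ (2 * abar) * (‖P s‖ + η) := by
          intro s hs
          have hsmem : s ∈ Icc (0:ℝ) t := ⟨le_trans hσ'0 hs.1, hs.2.le⟩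
          have h1 := hPnorm s hsmem
          have hZs := hZlt s (lt_of_lt_of_le hσ'.1 hs.1) hs.2.le
          have h3 : lam * Real.exp (lam * s) * ‖Y s‖ ≤ 2 * (A s + η) := by
            simp only [hZdef] at hZs; linarith
          have h4 : α s * (lam * Real.exp (lam * s) * ‖Y s‖) ≤ α s * (2 * (A s + η)) :=
            mul_le_mul_of_nonneg_left h3 (hα0 s (hsub hsmem))
          have h5 : α s ≤ abar := hαle s (hsub hsmem)
          have h6 : (0:ℝ) ≤ 2 * (A s + η) := by linarith [hA0 s]
          rw [← hA_eq]
          calc ‖(lam * Real.exp (lam * s)) • Du s‖ ≤ α s * (2 * (A s + η)) := le_trans h1 h4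
            _ ≤ abar * (2 * (A s + η)) := mul_le_mul_of_nonneg_right h5 h6
            _ = 2 * abar * (A s + η) := by ring
        have h := gronwall_fwd hσ'.2 (fun s hs => (hPd s (hsub3 hs)).mono hsub3)
          (continuous_const : Continuous fun _ : ℝ => 2 * abar)
          (fun s _ => by linarith) hη hbd ρ hρ
        have hconst : (∫ s in σ'..ρ, (2:ℝ) * abar) = 2 * abar * (ρ - σ') := by
          rw [intervalIntegral.integral_const, smul_eq_mul]; ring
        rw [hconst] at h
        rw [hA_eq, hA_eq]
        exact h
      -- integral bound on ‖Y σ₀‖ for each σ' ∈ (σ₀, t]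
      have hWint : ∀ p q : ℝ, p ∈ Icc (0:ℝ) t → q ∈ Icc (0:ℝ) t →
          IntervalIntegrable (fun ρ => ‖W ρ‖) MeasureTheory.volume p q := by
        intro p q hp hq
        apply ContinuousOn.intervalIntegrable
        exact hWc.norm.mono (uIcc_subset_Icc hp hq)
      have stepii : ∀ σ' ∈ Ioc σ₀ t, ‖Y σ₀‖ ≤ C * (σ' - σ₀) +
          (A σ' + η) * (Real.exp (-(2 * abar * σ')) *
            ((Real.exp ((-c) * σ') - Real.exp ((-c) * t)) / c)) := by
        intro σ' hσ'
        have hσ'0 : (0:ℝ) ≤ σ' := le_trans hσ₀mem.1 hσ'.1.le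
        have hσ'mem : σ' ∈ Icc (0:ℝ) t := ⟨hσ'0, hσ'.2⟩
        have hsplit : (∫ ρ in σ₀..t, ‖W ρ‖) =
            (∫ ρ in σ₀..σ', ‖W ρ‖) + ∫ ρ in σ'..t, ‖W ρ‖ :=
          (intervalIntegral.integral_add_adjacent_intervals
            (hWint σ₀ σ' hσ₀mem hσ'mem) (hWint σ' t hσ'mem (right_mem_Icc.2 ht0))).symm
        have hp1 : (∫ ρ in σ₀..σ', ‖W ρ‖) ≤ C * (σ' - σ₀) := by
          have : (∫ ρ in σ₀..σ', ‖W ρ‖) ≤ ∫ _ in σ₀..σ', C := by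
            apply intervalIntegral.integral_mono_on hσ'.1.le
              (hWint σ₀ σ' hσ₀mem hσ'mem) intervalIntegrable_const
            intro s hs
            exact hC s ⟨le_trans hσ₀mem.1 hs.1, le_trans hs.2 hσ'.2⟩
          rw [intervalIntegral.integral_const, smul_eq_mul] at this
          linarith
        have hexp : (∫ ρ in σ'..t, Real.exp ((-c) * ρ)) =
            (Real.exp ((-c) * σ') - Real.exp ((-c) * t)) / c := by
          have hF : ∀ ρ ∈ uIcc σ' t, HasDerivAt (fun ρ => -(1/c) * Real.exp ((-c) * ρ))
              (Real.exp ((-c) * ρ)) ρ := by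
            intro ρ _
            have h1 : HasDerivAt (fun ρ : ℝ => (-c) * ρ) (-c) ρ := by
              simpa using (hasDerivAt_id ρ).const_mul (-c)
            have h2 := (h1.exp).const_mul (-(1/c))
            convert h2 using 1
            case e'_9 =>
              rw [mul_comm (Real.exp _) (-c), ← mul_assoc, neg_mul_neg, one_div,
                inv_mul_cancel₀ hc0.ne', one_mul]
            all_goals rfl
          rw [intervalIntegral.integral_eq_sub_of_hasDerivAt hF
            ((Real.continuous_exp.comp (continuous_const.mul continuous_id)).intervalIntegrable _ _)]
          field_simp
          ring
        have hp2 : (∫ ρ in σ'..t, ‖W ρ‖) ≤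
            (A σ' + η) * (Real.exp (-(2 * abar * σ')) *
              ((Real.exp ((-c) * σ') - Real.exp ((-c) * t)) / c)) := by
          have hmono : (∫ ρ in σ'..t, ‖W ρ‖) ≤
              ∫ ρ in σ'..t, (A σ' + η) * Real.exp (-(2 * abar * σ')) * Real.exp ((-c) * ρ) := by
            apply intervalIntegral.integral_mono_on hσ'.2 (hWint σ' t hσ'mem (right_mem_Icc.2 ht0))
            · exact Continuous.intervalIntegrable (continuous_const.mul
                (Real.continuous_exp.comp (continuous_const.mul continuous_id))) _ _
            · intro ρ hρ
              have hAρ : A ρ ≤ (A σ' + η) * Real.exp (2 * abar * (ρ - σ')) := by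
                have := stepi σ' hσ' ρ hρ
                linarith
              have hkey : Real.exp (-(lam * ρ)) * ((A σ' + η) * Real.exp (2 * abar * (ρ - σ'))) =
                  (A σ' + η) * Real.exp (-(2 * abar * σ')) * Real.exp ((-c) * ρ) := by
                rw [mul_comm (Real.exp (-(lam * ρ)))]
                conv_lhs => rw [mul_assoc, ← Real.exp_add]
                conv_rhs => rw [mul_assoc, ← Real.exp_add]
                congr 1
                rw [hcdef]; ring
              rw [hWnorm ρ, ← hkey]
              apply mul_le_mul_of_nonneg_left hAρ (Real.exp_pos _).le
          rw [intervalIntegral.integral_const_mul, hexp] at hmono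
          calc (∫ ρ in σ'..t, ‖W ρ‖) ≤ _ := hmono
            _ = (A σ' + η) * (Real.exp (-(2 * abar * σ')) *
              ((Real.exp ((-c) * σ') - Real.exp ((-c) * t)) / c)) := by ring
        have hY0 := hYb σ₀ hσ₀mem
        rw [hsplit] at hY0
        linarith
      -- pass to the limit σ' → σ₀⁺
      set H : ℝ → ℝ := fun σ' => Real.exp (-(2 * abar * σ')) *
          ((Real.exp ((-c) * σ') - Real.exp ((-c) * t)) / c) with hHdef
      have hHcont : Continuous H := by
        apply Continuous.mul
        · exact Real.continuous_exp.comp (continuous_const.mul continuous_id).neg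
        · exact ((Real.continuous_exp.comp (continuous_const.mul continuous_id)).sub
            continuous_const).div_const c
      have hlb : Ioc σ₀ t ⊆ Icc (0:ℝ) t := fun r hr => ⟨le_trans hσ₀mem.1 hr.1.le, hr.2⟩
      have hnb : (𝓝[Ioc σ₀ t] σ₀).NeBot := by
        rw [nhdsWithin_Ioc_eq_nhdsGT hσ₀t]
        infer_instance
      have hAtend : Filter.Tendsto A (𝓝[Ioc σ₀ t] σ₀) (𝓝 (A σ₀)) :=
        (hAc σ₀ hσ₀mem).mono_left (nhdsWithin_mono _ hlb)
      have hFtend : Filter.Tendsto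
          (fun σ' => C * (σ' - σ₀) + (A σ' + η) * H σ') (𝓝[Ioc σ₀ t] σ₀)
          (𝓝 (C * (σ₀ - σ₀) + (A σ₀ + η) * H σ₀)) := by
        apply Filter.Tendsto.add
        · exact ((continuous_const.mul (continuous_id.sub continuous_const)).tendsto σ₀).mono_left
            nhdsWithin_le_nhds
        · exact (hAtend.add tendsto_const_nhds).mul
            ((hHcont.tendsto σ₀).mono_left nhdsWithin_le_nhds)
      have hYlim : ‖Y σ₀‖ ≤ C * (σ₀ - σ₀) + (A σ₀ + η) * H σ₀ := by
        apply ge_of_tendsto hFtend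
        apply Filter.eventually_of_mem self_mem_nhdsWithin
        intro σ' hσ'
        exact stepii σ' hσ'
      -- final arithmetic contradiction
      have e1 : Real.exp (lam * σ₀) * (Real.exp (-(2 * abar * σ₀)) * Real.exp ((-c) * σ₀)) = 1 := by
        rw [← Real.exp_add, ← Real.exp_add, ← Real.exp_zero]
        congr 1
        rw [hcdef]; ring
      have e2 : Real.exp (lam * σ₀) * (Real.exp (-(2 * abar * σ₀)) * Real.exp ((-c) * t)) =
          Real.exp (c * σ₀ - c * t) := by
        rw [← Real.exp_add, ← Real.exp_add]
        congr 1
        rw [hcdef]; ring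
      have hq : (0:ℝ) < Real.exp (c * σ₀ - c * t) := Real.exp_pos _
      have hAη : (0:ℝ) < A σ₀ + η := by linarith [hA0 σ₀]
      have hZup : Z σ₀ ≤ lam * Real.exp (lam * σ₀) * ((A σ₀ + η) * H σ₀) - 2 * (A σ₀ + η) := by
        have h1 : lam * Real.exp (lam * σ₀) * ‖Y σ₀‖ ≤
            lam * Real.exp (lam * σ₀) * (C * (σ₀ - σ₀) + (A σ₀ + η) * H σ₀) :=
          mul_le_mul_of_nonneg_left hYlim (by positivity)
        simp only [hZdef]
        have h2 : C * (σ₀ - σ₀) + (A σ₀ + η) * H σ₀ = (A σ₀ + η) * H σ₀ := by ring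
        rw [h2] at h1
        linarith
      have hHc : H σ₀ * c = Real.exp (-(2 * abar * σ₀)) *
          (Real.exp ((-c) * σ₀) - Real.exp ((-c) * t)) := by
        simp only [hHdef]
        rw [mul_assoc, div_mul_cancel₀ _ hc0.ne']
      have key2 : lam * Real.exp (lam * σ₀) * ((A σ₀ + η) * H σ₀) * c
          = lam * (A σ₀ + η) * (1 - Real.exp (c * σ₀ - c * t)) := by
        calc lam * Real.exp (lam * σ₀) * ((A σ₀ + η) * H σ₀) * c
            = lam * (A σ₀ + η) * (Real.exp (lam * σ₀) * (H σ₀ * c)) := by ring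
          _ = lam * (A σ₀ + η) *
              (Real.exp (lam * σ₀) * (Real.exp (-(2 * abar * σ₀)) * Real.exp ((-c) * σ₀))
              - Real.exp (lam * σ₀) * (Real.exp (-(2 * abar * σ₀)) * Real.exp ((-c) * t))) := by
              rw [hHc]; ring
          _ = lam * (A σ₀ + η) * (1 - Real.exp (c * σ₀ - c * t)) := by rw [e1, e2]
      have hlt : lam * (A σ₀ + η) * (1 - Real.exp (c * σ₀ - c * t)) < 2 * (A σ₀ + η) * c := by
        nlinarith [mul_pos (mul_pos hlam0 hAη) hq, mul_nonneg (by linarith : (0:ℝ) ≤ 2*c - lam) hAη.le]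
      have h8 : Z σ₀ * c ≤ (lam * Real.exp (lam * σ₀) * ((A σ₀ + η) * H σ₀) - 2 * (A σ₀ + η)) * c :=
        mul_le_mul_of_nonneg_right hZup hc0.le
      have h9 : (lam * Real.exp (lam * σ₀) * ((A σ₀ + η) * H σ₀) - 2 * (A σ₀ + η)) * c
          = lam * (A σ₀ + η) * (1 - Real.exp (c * σ₀ - c * t)) - 2 * (A σ₀ + η) * c := by
        rw [← key2]; ring
      have h10 : 0 ≤ Z σ₀ * c := mul_nonneg hσ₀Z' hc0.le
      linarith
    have hψ : ∀ s ∈ Icc (0:ℝ) t,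
        ‖(lam * Real.exp (lam * s)) • Du s‖ ≤ (2 * at' s) * (‖P s‖ + η) := by
      intro s hs
      have h1 := hPnorm s hs
      have h2 := hZneg s hs
      have h3 : lam * Real.exp (lam * s) * ‖Y s‖ ≤ 2 * (A s + η) := by
        simp only [hZdef] at h2; linarith
      have h4 : α s * (lam * Real.exp (lam * s) * ‖Y s‖) ≤ α s * (2 * (A s + η)) :=
        mul_le_mul_of_nonneg_left h3 (hα0 s (hsub hs))
      rw [hateq s (hsub hs), ← hA_eq s]
      calc ‖(lam * Real.exp (lam * s)) • Du s‖ ≤ α s * (2 * (A s + η)) := le_trans h1 h4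
        _ = 2 * α s * (A s + η) := by ring
    have hβc : Continuous (fun s => 2 * at' s) := continuous_const.mul hatcont
    have hβ0 : ∀ s ∈ Icc (0:ℝ) t, 0 ≤ 2 * at' s := fun s _ => by linarith [hat0 s]
    have fwd := gronwall_fwd ht0 hPd hβc hβ0 hη
      (fun s hs => hψ s ⟨hs.1, hs.2.le⟩) t (right_mem_Icc.2 ht0)
    have rev := gronwall_rev ht0 hPd hβc hβ0 hη hψ 0 (left_mem_Icc.2 ht0)
    rw [hEeq] at fwd rev
    rw [← hA_eq, ← hA_eq] at fwd rev
    exact ⟨fwd, rev⟩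
  have hEpos : 0 < Eex := Real.exp_pos _
  have hE1 : 1 ≤ Eex := by
    rw [hEdef]
    apply Real.one_le_exp
    apply intervalIntegral.integral_nonneg ht0
    intro s hs
    have := hα0 s (hsub hs)
    positivity
  have main1 : A t ≤ A 0 * Eex := by
    apply le_of_forall_pos_le_add
    intro ε hε
    have h1 := (key (ε / Eex) (by positivity)).1
    have h2 : (A 0 + ε / Eex) * Eex = A 0 * Eex + ε := by
      rw [add_mul]; congr 1; field_simp
    have hη0 : 0 < ε / Eex := by positivity
    linarith
  have main2 : A 0 ≤ A t * Eex := by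
    apply le_of_forall_pos_le_add
    intro ε hε
    have h1 := (key (ε / Eex) (by positivity)).2
    have h2 : (A t + ε / Eex) * Eex = A t * Eex + ε := by
      rw [add_mul]; congr 1; field_simp
    have hη0 : 0 < ε / Eex := by positivity
    linarith
  have hAt : A t = Real.exp (lam * t) * ‖v₁ - v₂‖ := by rw [hAdef]; simp [hWt]
  have hA00 : A 0 = ‖V₁ 0 - V₂ 0‖ := by simp [hAdef, hWdef]
  constructor
  · rw [← hA00]
    rw [inv_mul_eq_div, div_mul_eq_mul_div, div_le_iff₀ hEpos]
    calc Real.exp (lam * t) * ‖v₁ - v₂‖ = A t := hAt.symm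
      _ ≤ A 0 * Eex := main1
  · rw [← hA00]
    calc A 0 ≤ A t * Eex := main2
      _ = Eex * Real.exp (lam * t) * ‖v₁ - v₂‖ := by rw [hAt]; ring
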